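/- Let F_q be a finite field with q elements, k ≥ 2 a fixed integer, and ω_k(f) the number of monic irreducible factors of f with multiplicity exactly k. Then the number of monic polynomials f of degree n with ω_k(f) = 0 is at least (9/32) q^n for all n ≥ 1. -/

import Mathlib

open Filter Asymptotics Real Polynomial

/-- number of monic irreducible polynomials of degree r in F[t] -/
noncomputable def piq (F : Type*) [Field F] [Fintype F] (r : ℕ) : ℕ :=
  Nat.card {l : Polynomial F // l.Monic ∧ Irreducible l ∧ l.natDegree = r}

/-- the constant A₁ = γ + Σ_{r≥1} (π_q(r) - q^r/r) q^{-r} -/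
noncomputable def A1 (F : Type*) [Field F] [Fintype F] : ℝ :=
  Real.eulerMascheroniConstant +
    ∑' r : ℕ, if r = 0 then 0 else
      ((piq F r : ℝ) - (Fintype.card F : ℝ) ^ r / r) * ((Fintype.card F : ℝ) ^ r)⁻¹

/-- L(m) = Σ_{l ∈ P} |l|^{-m} -/
noncomputable def Lc (F : Type*) [Field F] [Fintype F] (m : ℕ) : ℝ :=
  ∑' l : {l : Polynomial F // l.Monic ∧ Irreducible l},
    (((Fintype.card F : ℝ) ^ (l : Polynomial F).natDegree) ^ m)⁻¹

/-- ω_k(f): the number of distinct monic irreducible factors of f with multiplicity exactly k -/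
noncomputable def omegak (F : Type*) [Field F] [Fintype F] (k : ℕ) (f : Polynomial F) : ℕ :=
  Nat.card {l : Polynomial F // l.Monic ∧ Irreducible l ∧ l ^ k ∣ f ∧ ¬ l ^ (k + 1) ∣ f}

section Aux

variable {F : Type*} [Field F] [Fintype F]

/-- monic polynomials of degree m are equivalent to `degreeLT F m` -/
noncomputable def monicEquiv (F : Type*) [Field F] (m : ℕ) :
    {f : F[X] // f.Monic ∧ f.natDegree = m} ≃ (Polynomial.degreeLT F m) where
  toFun f := ⟨f.1 - X ^ m, by
    rcases f with ⟨f, hf, hd⟩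
    rw [Polynomial.mem_degreeLT]
    by_cases h : f = X ^ m
    · simp [h, Ne, ← Polynomial.degree_eq_bot]
    · have h1 : f.degree = (X ^ m : F[X]).degree := by
        rw [Polynomial.degree_X_pow, Polynomial.degree_eq_natDegree hf.ne_zero, hd]
      have := Polynomial.degree_sub_lt h1 hf.ne_zero (by simp [hf.leadingCoeff])
      rwa [Polynomial.degree_eq_natDegree hf.ne_zero, hd] at this⟩
  invFun g := ⟨X ^ m + g.1, by
    have hg : (g : F[X]).degree < m := Polynomial.mem_degreeLT.mp g.2
    constructor
    · exact Polynomial.monic_X_pow_add hg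
    · have hdeg : (X ^ m + (g : F[X])).degree = (m : WithBot ℕ) := by
        rw [Polynomial.degree_add_eq_left_of_degree_lt (by simpa using hg), Polynomial.degree_X_pow]
      exact Polynomial.natDegree_eq_of_degree_eq_some hdeg⟩
  left_inv f := by ext1; simp
  right_inv g := by ext1; simp

lemma card_monic (m : ℕ) :
    Nat.card {f : F[X] // f.Monic ∧ f.natDegree = m} = Fintype.card F ^ m := by
  rw [Nat.card_congr ((monicEquiv F m).trans (Polynomial.degreeLTEquiv F m).toEquiv)]
  simp [Nat.card_eq_fintype_card]

noncomputable instance instFintypeMonic (m : ℕ) :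
    Fintype {f : F[X] // f.Monic ∧ f.natDegree = m} :=
  Fintype.ofEquiv _ ((monicEquiv F m).trans (Polynomial.degreeLTEquiv F m).toEquiv).symm

lemma irr_dvd_pow_sub (l : F[X]) (hm : l.Monic) (hi : Irreducible l) :
    l ∣ X ^ (Fintype.card F ^ l.natDegree) - X := by
  haveI : Fact (Irreducible l) := ⟨hi⟩
  set K := AdjoinRoot l
  have hl0 : l ≠ 0 := hm.ne_zero
  let pb := AdjoinRoot.powerBasis hl0
  haveI : Module.Finite F K := pb.finite
  haveI : Finite K := Module.finite_of_finite F
  haveI : Fintype K := Fintype.ofFinite K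
  have hcard : Fintype.card K = Fintype.card F ^ l.natDegree := by
    rw [Module.card_eq_pow_finrank (K := F) (V := K), pb.finrank]
    show Fintype.card F ^ (AdjoinRoot.powerBasis hl0).dim = _
    rw [AdjoinRoot.powerBasis_dim]
  have hx : (AdjoinRoot.root l) ^ (Fintype.card F ^ l.natDegree) = AdjoinRoot.root l := by
    rw [← hcard]; exact FiniteField.pow_card _
  have : (Polynomial.aeval (AdjoinRoot.root l))
      (X ^ (Fintype.card F ^ l.natDegree) - X : F[X]) = 0 := by
    simp [hx]
  rwa [AdjoinRoot.aeval_eq, AdjoinRoot.mk_eq_zero] at this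

open scoped Classical in
/-- the finset of monic irreducible polynomials of degree d -/
noncomputable def irrFinset (F : Type*) [Field F] [Fintype F] (d : ℕ) : Finset F[X] :=
  ((Finset.univ : Finset {f : F[X] // f.Monic ∧ f.natDegree = d}).filter
    (fun f => Irreducible f.1)).image Subtype.val

lemma mem_irrFinset {d : ℕ} {l : F[X]} :
    l ∈ irrFinset F d ↔ l.Monic ∧ Irreducible l ∧ l.natDegree = d := by
  classical
  simp only [irrFinset, Finset.mem_image, Finset.mem_filter, Finset.mem_univ, true_and]
  constructor
  · rintro ⟨⟨f, hf, hd⟩, hi, rfl⟩; exact ⟨hf, hi, hd⟩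
  · rintro ⟨hm, hi, hd⟩; exact ⟨⟨l, hm, hd⟩, by simpa using hi, rfl⟩

lemma card_irrFinset_le (d : ℕ) (hd : 1 ≤ d) :
    d * (irrFinset F d).card ≤ Fintype.card F ^ d := by
  have hq : 1 < Fintype.card F := Fintype.one_lt_card
  have hqd : 1 < Fintype.card F ^ d := Nat.one_lt_pow (by omega) hq
  have htne : (X ^ (Fintype.card F ^ d) - X : F[X]) ≠ 0 :=
    FiniteField.X_pow_card_sub_X_ne_zero F hqd
  have hdvd : (∏ l ∈ irrFinset F d, l) ∣ (X ^ (Fintype.card F ^ d) - X : F[X]) := by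
    apply Finset.prod_dvd_of_coprime
    · intro a ha b hb hab
      rw [Finset.mem_coe, mem_irrFinset] at ha hb
      refine (ha.2.1.coprime_iff_not_dvd).mpr (fun hdvd => hab ?_)
      exact Polynomial.eq_of_monic_of_associated ha.1 hb.1
        (associated_of_dvd_dvd hdvd (ha.2.1.dvd_symm hb.2.1 hdvd))
    · intro l hl
      rw [mem_irrFinset] at hl
      have := irr_dvd_pow_sub l hl.1 hl.2.1
      rwa [hl.2.2] at this
  have hle := Polynomial.natDegree_le_of_dvd hdvd htne
  rw [Polynomial.natDegree_prod _ _ (fun l hl => ((mem_irrFinset).mp hl).1.ne_zero),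
    FiniteField.X_pow_card_sub_X_natDegree_eq F hqd] at hle
  calc d * (irrFinset F d).card = ∑ l ∈ irrFinset F d, d := by
        rw [Finset.sum_const, smul_eq_mul, mul_comm]
    _ ≤ Fintype.card F ^ d := by
        refine le_trans (le_of_eq (Finset.sum_congr rfl ?_)) hle
        exact fun l hl => (((mem_irrFinset (l := l)).mp hl).2.2).symm

open scoped Classical in
/-- the finset of monic polynomials of degree m -/
noncomputable def Mfin (F : Type*) [Field F] [Fintype F] (m : ℕ) : Finset F[X] :=
  (Finset.univ : Finset {f : F[X] // f.Monic ∧ f.natDegree = m}).image Subtype.val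

lemma mem_Mfin {m : ℕ} {f : F[X]} : f ∈ Mfin F m ↔ f.Monic ∧ f.natDegree = m := by
  simp only [Mfin, Finset.mem_image, Finset.mem_univ, true_and]
  constructor
  · rintro ⟨⟨g, hg⟩, rfl⟩; exact hg
  · intro h; exact ⟨⟨f, h⟩, rfl⟩

lemma card_Mfin (m : ℕ) : (Mfin F m).card = Fintype.card F ^ m := by
  classical
  rw [Mfin, Finset.card_image_of_injective _ Subtype.val_injective, Finset.card_univ,
    ← Nat.card_eq_fintype_card]
  exact card_monic m

open scoped Classical in
lemma card_dvd_filter_le (l : F[X]) (hm : l.Monic) (k n : ℕ)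
    (h : k * l.natDegree ≤ n) :
    ((Mfin F n).filter (fun f => l ^ k ∣ f)).card ≤ Fintype.card F ^ (n - k * l.natDegree) := by
  rw [← card_Mfin (F := F) (n - k * l.natDegree)]
  have hlk : (l ^ k).Monic := hm.pow k
  have hlkd : (l ^ k).natDegree = k * l.natDegree := by
    rw [Polynomial.natDegree_pow]
  apply Finset.card_le_card_of_injOn (fun f => f /ₘ l ^ k)
  · intro f hf
    rw [Finset.mem_coe, Finset.mem_filter, mem_Mfin] at hf
    obtain ⟨⟨hfm, hfd⟩, hdvd⟩ := hf
    have heq : l ^ k * (f /ₘ l ^ k) = f := by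
      conv_rhs => rw [← Polynomial.modByMonic_add_div f (l ^ k)]
      rw [(Polynomial.modByMonic_eq_zero_iff_dvd hlk).mpr hdvd, zero_add]
    have hgm : (f /ₘ l ^ k).Monic := hlk.of_mul_monic_left (heq.symm ▸ hfm)
    rw [Finset.mem_coe, mem_Mfin]
    refine ⟨hgm, ?_⟩
    have := congrArg Polynomial.natDegree heq
    rw [Polynomial.natDegree_mul (hlk.ne_zero) hgm.ne_zero, hlkd, hfd] at this
    dsimp only
    omega
  · intro f1 hf1 f2 hf2 hEq
    rw [Finset.coe_filter, Set.mem_setOf_eq, mem_Mfin] at hf1 hf2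
    have e1 : l ^ k * (f1 /ₘ l ^ k) = f1 := by
      conv_rhs => rw [← Polynomial.modByMonic_add_div f1 (l ^ k)]
      rw [(Polynomial.modByMonic_eq_zero_iff_dvd hlk).mpr hf1.2, zero_add]
    have e2 : l ^ k * (f2 /ₘ l ^ k) = f2 := by
      conv_rhs => rw [← Polynomial.modByMonic_add_div f2 (l ^ k)]
      rw [(Polynomial.modByMonic_eq_zero_iff_dvd hlk).mpr hf2.2, zero_add]
    simp only at hEq
    rw [← e1, ← e2, hEq]

lemma sum_inv_two_pow_aux : ∀ D : ℕ, 2 ≤ D →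
    ∑ d ∈ Finset.Icc 1 D, (1 : ℝ) / (d * 2 ^ d) ≤ 17 / 24 - (1 / 3) * (1 / 2) ^ D := by
  intro D hD
  induction D, hD using Nat.le_induction with
  | base =>
    rw [show Finset.Icc 1 2 = {1, 2} by rfl]
    norm_num
  | succ D hD ih =>
    rw [Finset.sum_Icc_succ_top (by omega)]
    have hterm : (1 : ℝ) / ((D + 1) * 2 ^ (D + 1)) ≤ (1 / 3) * (1 / 2) ^ (D + 1) := by
      rw [div_le_iff₀ (by positivity)]
      have h3 : (3 : ℝ) ≤ (D : ℝ) + 1 := by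
        have : (2 : ℝ) ≤ (D : ℝ) := by exact_mod_cast hD
        linarith
      have h2 : ((1:ℝ)/2) ^ (D+1) * 2 ^ (D+1) = 1 := by
        rw [← mul_pow]; norm_num
      calc (1 : ℝ) = (1/3) * ((1/2)^(D+1) * 2^(D+1)) * 3 := by rw [h2]; ring
        _ ≤ (1/3) * ((1/2)^(D+1) * 2^(D+1)) * ((D:ℝ)+1) := by
            apply mul_le_mul_of_nonneg_left h3 (by positivity)
        _ = 1 / 3 * (1 / 2) ^ (D + 1) * (((D:ℕ):ℝ) + 1) * 2 ^ (D + 1) := by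
            push_cast; ring
        _ ≤ 1 / 3 * (1 / 2) ^ (D + 1) * ((((D:ℕ):ℝ) + 1) * 2 ^ (D + 1)) := by
            rw [← mul_assoc]
    have : (1:ℝ)/3 * (1/2)^D = 1/3 * (1/2)^(D+1) + 1/3 * (1/2)^(D+1) := by ring
    push_cast
    linarith [ih]

lemma sum_inv_two_pow (D : ℕ) : ∑ d ∈ Finset.Icc 1 D, (1 : ℝ) / (d * 2 ^ d) ≤ 17 / 24 := by
  rcases le_or_gt D 1 with h | h
  · interval_cases D
    · simp; norm_num
    · rw [show Finset.Icc 1 1 = {1} by rfl]; norm_num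
  · have := sum_inv_two_pow_aux D h
    have h2 : (0:ℝ) ≤ (1/3) * (1/2)^D := by positivity
    linarith

end Aux

/-- At least (9/32) qⁿ monic polynomials of degree n have ω_k(f) = 0, for k ≥ 2. -/
theorem omega_k_zero_count (F : Type*) [Field F] [Fintype F] (k : ℕ) (hk : 2 ≤ k)
    (n : ℕ) (hn : 1 ≤ n) :
    (9 : ℝ) / 32 * (Fintype.card F : ℝ) ^ n ≤
      (Nat.card {f : Polynomial F // f.Monic ∧ f.natDegree = n ∧ omegak F k f = 0} : ℝ) := by
  classical
  set q := Fintype.card F with hq_def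
  have hq : 2 ≤ q := Fintype.one_lt_card
  -- the bad predicate
  set E : F[X] → Prop := fun f => ∃ l : F[X],
    l.Monic ∧ Irreducible l ∧ l ^ k ∣ f ∧ ¬ l ^ (k + 1) ∣ f with hE_def
  set Bad : Finset F[X] := (Mfin F n).filter E with hBad_def
  set Good0 : Finset F[X] := (Mfin F n).filter (fun f => ¬ E f) with hGood0_def
  set GoodT : Finset F[X] := (Mfin F n).filter
    (fun f => f.Monic ∧ f.natDegree = n ∧ omegak F k f = 0) with hGoodT_def
  -- the target Nat.card equals GoodT.card
  have hcardT : (Nat.card {f : Polynomial F // f.Monic ∧ f.natDegree = n ∧ omegak F k f = 0}) =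
      GoodT.card := by
    have hset : {f : F[X] | f.Monic ∧ f.natDegree = n ∧ omegak F k f = 0} = ↑GoodT := by
      ext f
      simp only [hGoodT_def, Finset.coe_filter, Set.mem_setOf_eq, mem_Mfin]
      tauto
    rw [← Set.coe_setOf, Nat.card_coe_set_eq, hset, Set.ncard_coe_finset]
  -- Good0 ⊆ GoodT
  have hsub : Good0 ⊆ GoodT := by
    intro f hf
    rw [hGood0_def, Finset.mem_filter, mem_Mfin] at hf
    rw [hGoodT_def, Finset.mem_filter, mem_Mfin]
    refine ⟨⟨hf.1.1, hf.1.2⟩, hf.1.1, hf.1.2, ?_⟩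
    haveI : IsEmpty {l : Polynomial F //
        l.Monic ∧ Irreducible l ∧ l ^ k ∣ f ∧ ¬ l ^ (k + 1) ∣ f} :=
      ⟨fun l => hf.2 ⟨l.1, l.2⟩⟩
    exact Nat.card_of_isEmpty
  -- counting: Good0.card + Bad.card = q ^ n
  have hsplit : Good0.card + Bad.card = q ^ n := by
    rw [hGood0_def, hBad_def, ← card_Mfin (F := F) n]
    rw [add_comm]
    exact Finset.card_filter_add_card_filter_not _
  -- union bound for Bad
  have hBadsub : Bad ⊆ (Finset.Icc 1 (n / k)).biUnion (fun d =>
      (irrFinset F d).biUnion (fun l => (Mfin F n).filter (fun f => l ^ k ∣ f))) := by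
    intro f hf
    rw [hBad_def, Finset.mem_filter] at hf
    obtain ⟨hfM, l, hlm, hli, hldvd, _⟩ := hf
    have hfm := (mem_Mfin.mp hfM).1
    have hfd := (mem_Mfin.mp hfM).2
    have hd1 : 1 ≤ l.natDegree := hli.natDegree_pos
    have hkd : k * l.natDegree ≤ n := by
      have := Polynomial.natDegree_le_of_dvd hldvd hfm.ne_zero
      rwa [Polynomial.natDegree_pow, hfd] at this
    rw [Finset.mem_biUnion]
    refine ⟨l.natDegree, ?_, ?_⟩
    · rw [Finset.mem_Icc]
      exact ⟨hd1, (Nat.le_div_iff_mul_le (by omega)).mpr (by rw [mul_comm]; exact hkd)⟩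
    · rw [Finset.mem_biUnion]
      exact ⟨l, mem_irrFinset.mpr ⟨hlm, hli, rfl⟩, Finset.mem_filter.mpr ⟨hfM, hldvd⟩⟩
  have hBadcard : Bad.card ≤ ∑ d ∈ Finset.Icc 1 (n / k),
      (irrFinset F d).card * q ^ (n - k * d) := by
    refine le_trans (Finset.card_le_card hBadsub) ?_
    refine le_trans (Finset.card_biUnion_le) ?_
    apply Finset.sum_le_sum
    intro d hd
    rw [Finset.mem_Icc] at hd
    refine le_trans (Finset.card_biUnion_le) ?_
    calc ∑ l ∈ irrFinset F d, ((Mfin F n).filter (fun f => l ^ k ∣ f)).card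
        ≤ ∑ l ∈ irrFinset F d, q ^ (n - k * d) := by
          apply Finset.sum_le_sum
          intro l hl
          have hl' := mem_irrFinset.mp hl
          have hkd : k * l.natDegree ≤ n := by
            rw [hl'.2.2, mul_comm]
            exact (Nat.le_div_iff_mul_le (by omega)).mp hd.2
          have := card_dvd_filter_le l hl'.1 k n hkd
          rwa [hl'.2.2] at this
      _ = (irrFinset F d).card * q ^ (n - k * d) := by
          rw [Finset.sum_const, smul_eq_mul]
  -- real estimates
  have hq0 : (0 : ℝ) < (q : ℝ) := by positivity
  have hqn0 : (0 : ℝ) ≤ (q : ℝ) ^ n := by positivity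
  have hsum_real : (∑ d ∈ Finset.Icc 1 (n / k),
      (irrFinset F d).card * q ^ (n - k * d) : ℝ) ≤ (17 / 24) * (q : ℝ) ^ n := by
    have hterm : ∀ d ∈ Finset.Icc 1 (n / k),
        ((irrFinset F d).card * q ^ (n - k * d) : ℝ) ≤ (q : ℝ) ^ n * (1 / (d * 2 ^ d)) := by
      intro d hd
      rw [Finset.mem_Icc] at hd
      have hd1 : 1 ≤ d := hd.1
      have hkd : k * d ≤ n := by
        rw [mul_comm]
        exact (Nat.le_div_iff_mul_le (show 0 < k by omega)).mp hd.2
      have hdn : d ≤ n := le_trans (Nat.le_mul_of_pos_left d (by omega)) hkd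
      have hc : ((irrFinset F d).card : ℝ) ≤ (q : ℝ) ^ d / d := by
        rw [le_div_iff₀ (by exact_mod_cast Nat.cast_pos.mpr (by omega))]
        have := card_irrFinset_le (F := F) d hd1
        calc ((irrFinset F d).card : ℝ) * d = ((d * (irrFinset F d).card : ℕ) : ℝ) := by
              push_cast; ring
          _ ≤ ((q ^ d : ℕ) : ℝ) := by exact_mod_cast this
          _ = (q : ℝ) ^ d := by push_cast; ring
      have hpow : (q : ℝ) ^ d * (q : ℝ) ^ (n - k * d) ≤ (q : ℝ) ^ (n - d) := by
        rw [← pow_add]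
        apply pow_le_pow_right₀ (by exact_mod_cast (by omega : 1 ≤ q))
        have h2d' : 2 * d ≤ k * d := Nat.mul_le_mul_right d hk
        omega
      have h2q : (2 : ℝ) ^ d ≤ (q : ℝ) ^ d :=
        pow_le_pow_left₀ (by norm_num) (by exact_mod_cast hq) d
      have hd0 : (0 : ℝ) < (d : ℝ) := by exact_mod_cast (by omega : 0 < d)
      calc ((irrFinset F d).card * q ^ (n - k * d) : ℝ)
          = ((irrFinset F d).card : ℝ) * (q : ℝ) ^ (n - k * d) := by push_cast; ring
        _ ≤ ((q : ℝ) ^ d / d) * (q : ℝ) ^ (n - k * d) := by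
            apply mul_le_mul_of_nonneg_right hc (by positivity)
        _ = ((q : ℝ) ^ d * (q : ℝ) ^ (n - k * d)) / d := by ring
        _ ≤ (q : ℝ) ^ (n - d) / d := by gcongr
        _ ≤ (q : ℝ) ^ n * (1 / (d * 2 ^ d)) := by
            have hqd : (q : ℝ) ^ (n - d) * (2 : ℝ) ^ d ≤ (q : ℝ) ^ n := by
              calc (q : ℝ) ^ (n - d) * (2 : ℝ) ^ d ≤ (q : ℝ) ^ (n - d) * (q : ℝ) ^ d := by
                    apply mul_le_mul_of_nonneg_left h2q (by positivity)
                _ = (q : ℝ) ^ n := by rw [← pow_add]; congr 1; omega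
            rw [mul_one_div, div_le_div_iff₀ hd0 (by positivity)]
            calc (q:ℝ)^(n-d) * ((d:ℝ) * 2^d) = ((q:ℝ)^(n-d) * 2^d) * d := by ring
              _ ≤ (q:ℝ)^n * d := mul_le_mul_of_nonneg_right hqd hd0.le
    calc (∑ d ∈ Finset.Icc 1 (n / k), (irrFinset F d).card * q ^ (n - k * d) : ℝ)
        ≤ ∑ d ∈ Finset.Icc 1 (n / k), (q : ℝ) ^ n * (1 / (d * 2 ^ d)) :=
          Finset.sum_le_sum hterm
      _ = (q : ℝ) ^ n * ∑ d ∈ Finset.Icc 1 (n / k), (1 : ℝ) / (d * 2 ^ d) := by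
          rw [Finset.mul_sum]
      _ ≤ (q : ℝ) ^ n * (17 / 24) := by
          apply mul_le_mul_of_nonneg_left (sum_inv_two_pow _) hqn0
      _ = (17 / 24) * (q : ℝ) ^ n := by ring
  -- put it together
  have hGoodT_ge : ((q : ℝ) ^ n) - (17 / 24) * (q : ℝ) ^ n ≤ (GoodT.card : ℝ) := by
    have h1 : (Good0.card : ℝ) + (Bad.card : ℝ) = (q : ℝ) ^ n := by exact_mod_cast hsplit
    have h2 : (Bad.card : ℝ) ≤ (17 / 24) * (q : ℝ) ^ n := by
      refine le_trans ?_ hsum_real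
      have h2' := (Nat.cast_le (α := ℝ)).mpr hBadcard
      push_cast at h2' ⊢
      exact h2'
    have h3 : (Good0.card : ℝ) ≤ (GoodT.card : ℝ) :=
      Nat.cast_le.mpr (Finset.card_le_card hsub)
    linarith
  rw [hcardT]
  calc (9 : ℝ) / 32 * (q : ℝ) ^ n ≤ (7 / 24) * (q : ℝ) ^ n := by nlinarith
    _ = (q : ℝ) ^ n - (17 / 24) * (q : ℝ) ^ n := by ring
    _ ≤ (GoodT.card : ℝ) := hGoodT_ge
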